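/- Let P be a nontrivial n-qubit Pauli and suppose there exist a Clifford V and nonzero m ∈ {0,1}^n with V† Z_m V = P, where Z_m = ⊗_i Z^{m_i}. Then for the MUB ensemble {U} whose stabilizer groups partition the nontrivial Paulis, the shadow-estimation second moment for O = P equals Σ_{U,b} (2^n+1) ⟨b|UPU†|b⟩² ⟨b|Uρ U†|b⟩ = 2^n + 1 for every density matrix ρ; in particular ⟨b|U P U†|b⟩ ∈ {0, ±1}, being ±1 only for the unique MUB element U = V containing P in its stabilizer group and 0 for all others. -/
import Mathlib


open Matrix Finset
open scoped ComplexOrder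

noncomputable section

/-- Bit strings of length `n`, indexing the computational basis of `n` qubits. -/
abbrev Bits (n : ℕ) := Fin n → Fin 2

/-- The four single-qubit Pauli matrices `I, X, Y, Z`. -/
def P1 : Fin 4 → Matrix (Fin 2) (Fin 2) ℂ :=
  ![!![1, 0; 0, 1], !![0, 1; 1, 0], !![0, -Complex.I; Complex.I, 0], !![1, 0; 0, -1]]

/-- The `n`-qubit Pauli string `⊗_k P1 (a k)`. -/
def PString (n : ℕ) (a : Fin n → Fin 4) : Matrix (Bits n) (Bits n) ℂ :=
  Matrix.of fun x y => ∏ k, P1 (a k) (x k) (y k)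

/-- The single-qubit Pauli-Z matrix. -/
def PZ : Matrix (Fin 2) (Fin 2) ℂ := !![1, 0; 0, -1]

/-- The tensor product `Z_m = ⊗_i Z^{m_i}`. -/
def Zm (n : ℕ) (m : Bits n) : Matrix (Bits n) (Bits n) ℂ :=
  Matrix.of fun x y => ∏ k, (PZ ^ (m k : ℕ)) (x k) (y k)

/-- A unitary is Clifford if conjugation sends every Pauli string to a phase
(`±1, ±i`) times a Pauli string. -/
def IsClifford (n : ℕ) (U : Matrix (Bits n) (Bits n) ℂ) : Prop :=
  ∀ a : Fin n → Fin 4, ∃ c ∈ ({1, -1, Complex.I, -Complex.I} : Set ℂ),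
    ∃ a' : Fin n → Fin 4, Uᴴ * PString n a * U = c • PString n a'

/-- character value -/
def chi (m b : Fin 2) : ℂ := (PZ ^ (m : ℕ)) b b

lemma PZpow_apply (m s t : Fin 2) :
    (PZ ^ (m : ℕ)) s t = if s = t then chi m s else 0 := by
  fin_cases m <;> fin_cases s <;> fin_cases t <;>
    simp [chi, PZ, Matrix.one_apply]

lemma chi_sq (m b : Fin 2) : chi m b * chi m b = 1 := by
  fin_cases m <;> fin_cases b <;> simp [chi, PZ, Matrix.one_apply] <;> norm_num

lemma chi_vals (m b : Fin 2) : chi m b = 1 ∨ chi m b = -1 := by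
  fin_cases m <;> fin_cases b <;> simp [chi, PZ, Matrix.one_apply]

lemma chi_orth (b x : Fin 2) :
    ∑ s : Fin 2, chi s b * chi s x = if b = x then 2 else 0 := by
  fin_cases b <;> fin_cases x <;>
    simp [chi, PZ, Fin.sum_univ_two, Matrix.one_apply] <;> norm_num

lemma sum_pi_prod {n : ℕ} (g : Fin n → Fin 2 → ℂ) :
    ∑ x : Bits n, ∏ k, g k (x k) = ∏ k, ∑ s : Fin 2, g k s := by
  rw [← Finset.sum_prod_piFinset Finset.univ g, Fintype.piFinset_univ]

lemma Zm_eq_diagonal {n : ℕ} (m : Bits n) :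
    Zm n m = Matrix.diagonal (fun x => ∏ k, chi (m k) (x k)) := by
  ext x y
  by_cases h : x = y
  · subst h
    simp [Zm, Matrix.diagonal_apply_eq, PZpow_apply]
  · obtain ⟨k, hk⟩ := Function.ne_iff.mp h
    rw [Matrix.diagonal_apply_ne _ h]
    exact Finset.prod_eq_zero (Finset.mem_univ k) (by rw [PZpow_apply, if_neg hk])

lemma trace_P1_mul (i j : Fin 4) :
    (P1 i * P1 j).trace = if i = j then 2 else 0 := by
  fin_cases i <;> fin_cases j <;>
    simp [P1, Matrix.trace, Matrix.mul_apply, Fin.sum_univ_two, Matrix.diag] <;>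
    ring_nf <;> simp [Complex.I_sq] <;> ring

lemma trace_PString_mul {n : ℕ} (a a' : Fin n → Fin 4) :
    (PString n a * PString n a').trace = if a = a' then (2 : ℂ) ^ n else 0 := by
  have h1 : (PString n a * PString n a').trace
      = ∑ x : Bits n, ∑ y : Bits n, ∏ k, (P1 (a k) (x k) (y k) * P1 (a' k) (y k) (x k)) := by
    simp [Matrix.trace, Matrix.diag, Matrix.mul_apply, PString, Finset.prod_mul_distrib]
  rw [h1]
  have h2 : ∀ x : Bits n,
      ∑ y : Bits n, ∏ k, (P1 (a k) (x k) (y k) * P1 (a' k) (y k) (x k))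
        = ∏ k, ∑ t : Fin 2, (P1 (a k) (x k) t * P1 (a' k) t (x k)) := by
    intro x
    exact sum_pi_prod (fun k t => P1 (a k) (x k) t * P1 (a' k) t (x k))
  rw [Finset.sum_congr rfl (fun x _ => h2 x)]
  rw [sum_pi_prod (fun k s => ∑ t : Fin 2, (P1 (a k) s t * P1 (a' k) t s))]
  have h3 : ∀ k, (∑ s : Fin 2, ∑ t : Fin 2, (P1 (a k) s t * P1 (a' k) t s))
      = (P1 (a k) * P1 (a' k)).trace := by
    intro k
    simp [Matrix.trace, Matrix.diag, Matrix.mul_apply]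
  rw [Finset.prod_congr rfl (fun k _ => h3 k)]
  by_cases h : a = a'
  · subst h; simp [trace_P1_mul]
  · obtain ⟨k, hk⟩ := Function.ne_iff.mp h
    rw [if_neg h]
    exact Finset.prod_eq_zero (Finset.mem_univ k) (by rw [trace_P1_mul, if_neg hk])

lemma trace_PString {n : ℕ} (a : Fin n → Fin 4) (ha : a ≠ fun _ => 0) :
    (PString n a).trace = 0 := by
  have h1 : (PString n a).trace = ∑ x : Bits n, ∏ k, P1 (a k) (x k) (x k) := by
    simp [Matrix.trace, Matrix.diag, PString]
  rw [h1, sum_pi_prod (fun k s => P1 (a k) s s)]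
  obtain ⟨k, hk⟩ := Function.ne_iff.mp ha
  refine Finset.prod_eq_zero (Finset.mem_univ k) ?_
  have h4 : ∀ i : Fin 4, i ≠ 0 → (∑ s : Fin 2, P1 i s s) = 0 := by
    intro i hi
    fin_cases i <;> simp [P1, Fin.sum_univ_two] at hi ⊢
  exact h4 _ hk

lemma PString_herm {n : ℕ} (a : Fin n → Fin 4) : (PString n a)ᴴ = PString n a := by
  ext x y
  simp only [Matrix.conjTranspose_apply, PString, Matrix.of_apply, star_prod]
  refine Finset.prod_congr rfl fun k _ => ?_
  have : ∀ (i : Fin 4) (s t : Fin 2), star (P1 i s t) = P1 i t s := by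
    intro i s t
    fin_cases i <;> fin_cases s <;> fin_cases t <;> simp [P1]
  exact this _ _ _

lemma PString_ne_zero {n : ℕ} (a : Fin n → Fin 4) : PString n a ≠ 0 := by
  intro h
  have := trace_PString_mul a a
  rw [h, Matrix.zero_mul, Matrix.trace_zero, if_pos rfl] at this
  have h2 : ((2:ℂ)^n) ≠ 0 := pow_ne_zero _ two_ne_zero
  exact h2 this.symm

lemma Zm_as_PString {n : ℕ} (m : Bits n) :
    Zm n m = PString n (fun k => if m k = 0 then 0 else 3) := by
  ext x y
  simp only [Zm, PString, Matrix.of_apply]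
  refine Finset.prod_congr rfl fun k _ => ?_
  by_cases h : m k = 0
  · rw [h, if_pos rfl]
    show (PZ ^ ((0:Fin 2):ℕ)) (x k) (y k) = P1 0 (x k) (y k)
    have : ((0:Fin 2):ℕ) = 0 := rfl
    rw [this, pow_zero, Matrix.one_fin_two]
    rfl
  · have hm1 : m k = 1 := by omega
    have h1 : (if m k = 0 then (0:Fin 4) else 3) = 3 := if_neg h
    rw [h1, hm1]
    show (PZ ^ ((1:Fin 2):ℕ)) (x k) (y k) = P1 3 (x k) (y k)
    have : ((1:Fin 2):ℕ) = 1 := rfl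
    rw [this, pow_one]
    rfl

lemma Zm_zero {n : ℕ} : Zm n (fun _ => 0) = 1 := by
  rw [Zm_eq_diagonal]
  simp [chi, Matrix.diagonal_one]

lemma sum_chi_prod {n : ℕ} (b x : Bits n) :
    ∑ m : Bits n, ∏ k, (chi (m k) (b k) * chi (m k) (x k))
      = if b = x then (2:ℂ)^n else 0 := by
  rw [sum_pi_prod (fun k s => chi s (b k) * chi s (x k))]
  simp_rw [chi_orth]
  by_cases h : b = x
  · subst h; simp
  · obtain ⟨k, hk⟩ := Function.ne_iff.mp h
    rw [if_neg h]
    exact Finset.prod_eq_zero (Finset.mem_univ k) (if_neg hk)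

lemma diag_inversion {n : ℕ} (M : Matrix (Bits n) (Bits n) ℂ) (b : Bits n) :
    ∑ m : Bits n, (∏ k, chi (m k) (b k)) * (Zm n m * M).trace
      = (2:ℂ)^n * M b b := by
  have htr : ∀ m : Bits n, (Zm n m * M).trace
      = ∑ x : Bits n, (∏ k, chi (m k) (x k)) * M x x := by
    intro m
    rw [Zm_eq_diagonal]
    simp [Matrix.trace, Matrix.diag, Matrix.diagonal_mul]
  calc ∑ m : Bits n, (∏ k, chi (m k) (b k)) * (Zm n m * M).trace
      = ∑ m : Bits n, ∑ x : Bits n,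
          (∏ k, (chi (m k) (b k) * chi (m k) (x k))) * M x x := by
        refine Finset.sum_congr rfl fun m _ => ?_
        rw [htr m, Finset.mul_sum]
        refine Finset.sum_congr rfl fun x _ => ?_
        rw [Finset.prod_mul_distrib, mul_assoc]
    _ = ∑ x : Bits n,
          (∑ m : Bits n, ∏ k, (chi (m k) (b k) * chi (m k) (x k))) * M x x := by
        rw [Finset.sum_comm]
        exact Finset.sum_congr rfl fun x _ => (Finset.sum_mul ..).symm
    _ = (2:ℂ)^n * M b b := by
        simp_rw [sum_chi_prod]
        rw [Finset.sum_eq_single b]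
        · rw [if_pos rfl]
        · intro x _ hx
          rw [if_neg (Ne.symm hx), zero_mul]
        · intro h; exact absurd (Finset.mem_univ b) h

lemma Zm_herm {n : ℕ} (m : Bits n) : (Zm n m)ᴴ = Zm n m := by
  rw [Zm_as_PString, PString_herm]

/-- for a nontrivial Pauli `P` belonging (via `V† Z_{m₀} V = P`) to the
stabilizer group of the MUB element `V = U u₀` of a stabilizer MUB ensemble whose
stabilizer groups partition the nontrivial Paulis, the shadow second moment for `O = P`
equals `2^n + 1` for every density matrix `ρ`; moreover `⟨b|UPU†|b⟩ ∈ {0, ±1}`, being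
`±1` only for the unique MUB element `u₀` and `0` for all other elements. -/
theorem stmt16 (n : ℕ) (ι : Type) [Fintype ι] (hι : Fintype.card ι = 2 ^ n + 1)
    (U : ι → Matrix (Bits n) (Bits n) ℂ)
    (hU : ∀ u, (U u)ᴴ * U u = 1 ∧ U u * (U u)ᴴ = 1)
    (hUC : ∀ u, IsClifford n (U u))
    (hcover : ∀ a : Fin n → Fin 4, a ≠ (fun _ => 0) →
      ∃! q : ι × Bits n, q.2 ≠ (fun _ => 0) ∧
        ((U q.1)ᴴ * Zm n q.2 * U q.1 = PString n a ∨
          (U q.1)ᴴ * Zm n q.2 * U q.1 = -(PString n a)))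
    (a : Fin n → Fin 4) (ha : a ≠ (fun _ => 0))
    (u₀ : ι) (m₀ : Bits n) (hm₀ : m₀ ≠ (fun _ => 0))
    (hst : (U u₀)ᴴ * Zm n m₀ * U u₀ = PString n a)
    (ρ : Matrix (Bits n) (Bits n) ℂ) (hρ : ρ.PosSemidef) (hρtr : ρ.trace = 1) :
    (∑ u : ι, ∑ b : Bits n, ((2 : ℂ) ^ n + 1) *
        ((U u * PString n a * (U u)ᴴ) b b) ^ 2 * ((U u * ρ * (U u)ᴴ) b b)
      = (2 : ℂ) ^ n + 1)
    ∧ (∀ u : ι, ∀ b : Bits n,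
        (U u * PString n a * (U u)ᴴ) b b = 0 ∨
        (U u * PString n a * (U u)ᴴ) b b = 1 ∨
        (U u * PString n a * (U u)ᴴ) b b = -1)
    ∧ (∀ u : ι, u ≠ u₀ → ∀ b : Bits n, (U u * PString n a * (U u)ᴴ) b b = 0)
    ∧ (∀ b : Bits n,
        (U u₀ * PString n a * (U u₀)ᴴ) b b = 1 ∨
        (U u₀ * PString n a * (U u₀)ᴴ) b b = -1) := by
  -- the conjugated Pauli at `u₀` is `Z_{m₀}`
  have key0 : U u₀ * PString n a * (U u₀)ᴴ = Zm n m₀ := by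
    rw [← hst]
    have e : U u₀ * ((U u₀)ᴴ * Zm n m₀ * U u₀) * (U u₀)ᴴ
        = (U u₀ * (U u₀)ᴴ) * Zm n m₀ * (U u₀ * (U u₀)ᴴ) := by
      simp only [Matrix.mul_assoc]
    rw [e, (hU u₀).2, Matrix.one_mul, Matrix.mul_one]
  -- diagonal of `Z_{m₀}` is `±1`
  have hdiag0 : ∀ b : Bits n,
      (U u₀ * PString n a * (U u₀)ᴴ) b b = 1 ∨
      (U u₀ * PString n a * (U u₀)ᴴ) b b = -1 := by
    intro b
    rw [key0, Zm_eq_diagonal, Matrix.diagonal_apply_eq]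
    refine mul_self_eq_one_iff.mp ?_
    rw [← Finset.prod_mul_distrib]
    exact Finset.prod_eq_one fun k _ => chi_sq _ _
  -- zero diagonal elsewhere
  have hzero : ∀ u : ι, u ≠ u₀ → ∀ b : Bits n,
      (U u * PString n a * (U u)ᴴ) b b = 0 := by
    intro u hu b
    have hterm : ∀ m : Bits n,
        (Zm n m * (U u * PString n a * (U u)ᴴ)).trace = 0 := by
      intro m
      have hcyc : (Zm n m * (U u * PString n a * (U u)ᴴ)).trace
          = (((U u)ᴴ * Zm n m * U u) * PString n a).trace := by
        have e1 : Zm n m * (U u * PString n a * (U u)ᴴ)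
            = (Zm n m * U u * PString n a) * (U u)ᴴ := by
          simp only [Matrix.mul_assoc]
        rw [e1, Matrix.trace_mul_comm]
        simp only [Matrix.mul_assoc]
      by_cases hm : m = fun _ => 0
      · subst hm
        rw [hcyc, Zm_zero, Matrix.mul_one, (hU u).1, Matrix.one_mul]
        exact trace_PString a ha
      · obtain ⟨c, hc, a', hca'⟩ := hUC u (fun k => if m k = 0 then 0 else 3)
        rw [← Zm_as_PString] at hca'
        by_cases haa : a' = a
        · exfalso
          rw [haa] at hca'
          -- hermiticity forces `c` real
          have h1 : ((U u)ᴴ * Zm n m * U u)ᴴ = (U u)ᴴ * Zm n m * U u := by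
            rw [Matrix.conjTranspose_mul, Matrix.conjTranspose_mul,
              Matrix.conjTranspose_conjTranspose, Zm_herm, Matrix.mul_assoc]
          have h2 : (starRingEnd ℂ) c • PString n a = c • PString n a := by
            have := h1
            rw [hca', Matrix.conjTranspose_smul, PString_herm] at this
            exact this
          have h3 : (starRingEnd ℂ) c = c := by
            by_contra hne
            have : ((starRingEnd ℂ) c - c) • PString n a = 0 := by
              rw [sub_smul, h2, sub_self]
            rcases smul_eq_zero.mp this with h | h
            · exact hne (by linear_combination h)
            · exact PString_ne_zero a h
          have hc2 : c = 1 ∨ c = -1 := by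
            simp only [Set.mem_insert_iff, Set.mem_singleton_iff] at hc
            rcases hc with rfl | rfl | rfl | rfl
            · exact Or.inl rfl
            · exact Or.inr rfl
            · exfalso
              rw [Complex.conj_I] at h3
              exact Complex.I_ne_zero (by linear_combination -h3/2)
            · exfalso
              simp only [map_neg, Complex.conj_I, neg_neg] at h3
              exact Complex.I_ne_zero (by linear_combination h3/2)
          -- uniqueness of the stabilizer element
          obtain ⟨q, _, huniq⟩ := hcover a ha
          have e1 : ((u₀, m₀) : ι × Bits n) = q := huniq _ ⟨hm₀, Or.inl hst⟩
          have e2 : ((u, m) : ι × Bits n) = q := by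
            refine huniq _ ⟨hm, ?_⟩
            rcases hc2 with rfl | rfl
            · exact Or.inl (by rw [hca', one_smul])
            · exact Or.inr (by rw [hca', neg_smul, one_smul])
          have : u = u₀ := congrArg Prod.fst (e2.trans e1.symm)
          exact hu this
        · rw [hcyc, hca', Matrix.smul_mul, Matrix.trace_smul,
            trace_PString_mul, if_neg haa, smul_zero]
    have h0 : (2:ℂ)^n * (U u * PString n a * (U u)ᴴ) b b = 0 := by
      rw [← diag_inversion]
      simp [hterm]
    rcases mul_eq_zero.mp h0 with h | h
    · exact absurd h (pow_ne_zero _ two_ne_zero)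
    · exact h
  refine ⟨?_, ?_, hzero, hdiag0⟩
  · rw [Fintype.sum_eq_single u₀ (fun u hu => Finset.sum_eq_zero fun b _ => by
      rw [hzero u hu b]; ring)]
    have hb2 : ∀ b : Bits n, ((U u₀ * PString n a * (U u₀)ᴴ) b b) ^ 2 = 1 := by
      intro b
      rcases hdiag0 b with h | h <;> rw [h] <;> ring
    calc ∑ b : Bits n, ((2 : ℂ) ^ n + 1) *
          ((U u₀ * PString n a * (U u₀)ᴴ) b b) ^ 2 * ((U u₀ * ρ * (U u₀)ᴴ) b b)
        = ((2 : ℂ) ^ n + 1) * ∑ b : Bits n, (U u₀ * ρ * (U u₀)ᴴ) b b := by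
          rw [Finset.mul_sum]
          exact Finset.sum_congr rfl fun b _ => by rw [hb2 b, mul_one]
      _ = ((2 : ℂ) ^ n + 1) * (U u₀ * ρ * (U u₀)ᴴ).trace := rfl
      _ = (2 : ℂ) ^ n + 1 := by
          rw [Matrix.trace_mul_comm, ← Matrix.mul_assoc, (hU u₀).1,
            Matrix.one_mul, hρtr, mul_one]
  · intro u b
    by_cases hu : u = u₀
    · subst hu
      rcases hdiag0 b with h | h
      · exact Or.inr (Or.inl h)
      · exact Or.inr (Or.inr h)
    · exact Or.inl (hzero u hu b)
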